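/- Let {(P_i, R_i) : i ∈ I} be a compact representation of the bipartite graph I(P,R), and let G be the five-layer network with source s, edges (s,p) of capacity s_p, a vertex v_i for each i ∈ I with edges (p, v_i) for p ∈ P_i and (v_i, r) for r ∈ R_i of capacity μ = min(Σ s_p, Σ d_r), edges (r,t) of capacity d_r, and sink t. Then G admits an s-t flow of value η if and only if there exists a matching of value η for the matching problem on I(P,R) with supplies s_p and demands d_r. -/

import Mathlib

/-- Let `{(Ps i, Rs i) : i ∈ I}` be a compact representation of the bipartite incidence
graph `E` on `P ⊔ R`, and let `G` be the five-layer network with source, feeder edges of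
capacity `s p`, a middle vertex for each `i ∈ I` with edges from `Ps i` and to `Rs i` of
capacity `μ = min(Σ s, Σ d)`, draining edges of capacity `d r`, and sink. Then `G` admits
an `s`-`t` flow of value `η` iff the matching problem on `E` with supplies `s` and
demands `d` admits a matching of value `η`. -/
theorem stmt5 {P R ι : Type*} [Fintype P] [Fintype R] [DecidableEq ι]
    (E : P → R → Prop) (s : P → ℝ) (d : R → ℝ)
    (hs : ∀ p, 0 < s p) (hd : ∀ r, 0 < d r)
    (I : Finset ι) (Ps : ι → Finset P) (Rs : ι → Finset R)
    (hrep : ∀ p r, E p r ↔ ∃ i ∈ I, p ∈ Ps i ∧ r ∈ Rs i)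
    (μ : ℝ) (hμ : μ = min (∑ p, s p) (∑ r, d r)) (η : ℝ) :
    (∃ (fs : P → ℝ) (f₁ : P → ι → ℝ) (f₂ : ι → R → ℝ) (ft : R → ℝ),
        (∀ p, 0 ≤ fs p) ∧ (∀ p i, 0 ≤ f₁ p i) ∧ (∀ i r, 0 ≤ f₂ i r) ∧ (∀ r, 0 ≤ ft r) ∧
        (∀ p, fs p ≤ s p) ∧ (∀ r, ft r ≤ d r) ∧
        (∀ p i, f₁ p i ≤ μ) ∧ (∀ i r, f₂ i r ≤ μ) ∧
        (∀ p i, f₁ p i ≠ 0 → i ∈ I ∧ p ∈ Ps i) ∧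
        (∀ i r, f₂ i r ≠ 0 → i ∈ I ∧ r ∈ Rs i) ∧
        (∀ p, fs p = ∑ i ∈ I, f₁ p i) ∧
        (∀ i, ∑ p, f₁ p i = ∑ r, f₂ i r) ∧
        (∀ r, ft r = ∑ i ∈ I, f₂ i r) ∧
        ∑ p, fs p = η) ↔
    (∃ a : P → R → ℝ,
        (∀ p r, 0 ≤ a p r) ∧ (∀ p r, a p r ≠ 0 → E p r) ∧
        (∀ p, ∑ r, a p r ≤ s p) ∧ (∀ r, ∑ p, a p r ≤ d r) ∧
        ∑ p, ∑ r, a p r = η) := by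
  constructor
  · rintro ⟨fs, f₁, f₂, ft, h0s, h01, h02, h0t, hcs, hct, -, -, hsup1, hsup2, hfs, hcons,
      hft, hval⟩
    set T : ι → ℝ := fun i => ∑ p, f₁ p i with hT
    set a : P → R → ℝ := fun p r => ∑ i ∈ I, f₁ p i * f₂ i r / T i with ha
    have hrow : ∀ p, ∑ r, a p r = fs p := by
      intro p
      rw [hfs p, Finset.sum_comm]
      refine Finset.sum_congr rfl fun i _ => ?_
      rcases eq_or_ne (T i) 0 with hTi | hTi
      · have h1 : f₁ p i = 0 := by
          have := (Finset.sum_eq_zero_iff_of_nonneg (fun q _ => h01 q i)).mp hTi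
          exact this p (Finset.mem_univ p)
        simp [h1]
      · rw [← Finset.sum_div, ← Finset.mul_sum, ← hcons i]
        field_simp
        rfl
    have hcol : ∀ r, ∑ p, a p r = ft r := by
      intro r
      rw [hft r, Finset.sum_comm]
      refine Finset.sum_congr rfl fun i _ => ?_
      rcases eq_or_ne (T i) 0 with hTi | hTi
      · have h2 : f₂ i r = 0 := by
          have h0 : ∑ r, f₂ i r = 0 := by rw [← hcons i]; exact hTi
          exact (Finset.sum_eq_zero_iff_of_nonneg (fun q _ => h02 i q)).mp h0 r
            (Finset.mem_univ r)
        simp [h2]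
      · rw [← Finset.sum_div, ← Finset.sum_mul]
        show (T i) * f₂ i r / T i = f₂ i r
        field_simp
    refine ⟨a, ?_, ?_, ?_, ?_, ?_⟩
    · intro p r
      refine Finset.sum_nonneg fun i _ => ?_
      have hTnn : 0 ≤ T i := Finset.sum_nonneg fun q _ => h01 q i
      exact div_nonneg (mul_nonneg (h01 p i) (h02 i r)) hTnn
    · intro p r hpr
      obtain ⟨i, hiI, hterm⟩ := Finset.exists_ne_zero_of_sum_ne_zero hpr
      have h1 : f₁ p i ≠ 0 := fun h => hterm (by simp [h])
      have h2 : f₂ i r ≠ 0 := fun h => hterm (by simp [h])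
      exact (hrep p r).mpr ⟨i, hiI, (hsup1 p i h1).2, (hsup2 i r h2).2⟩
    · intro p; rw [hrow p]; exact hcs p
    · intro r; rw [hcol r]; exact hct r
    · rw [← hval]; exact Finset.sum_congr rfl fun p _ => hrow p
  · rintro ⟨a, ha0, haE, has, had, haη⟩
    have hμ0 : 0 ≤ μ := by
      rw [hμ]
      exact le_min (Finset.sum_nonneg fun p _ => (hs p).le)
        (Finset.sum_nonneg fun r _ => (hd r).le)
    by_cases hall : ∀ p r, a p r = 0
    · refine ⟨0, 0, 0, 0, by simp, by simp, by simp, by simp,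
        fun p => (hs p).le, fun r => (hd r).le, fun _ _ => hμ0, fun _ _ => hμ0,
        by simp, by simp, by simp, by simp, by simp, ?_⟩
      simp only [Pi.zero_apply, Finset.sum_const_zero]
      rw [← haη]
      exact (Finset.sum_eq_zero fun p _ => Finset.sum_eq_zero fun r _ => (hall p r).symm ▸ rfl).symm
    · push_neg at hall
      obtain ⟨p₀, r₀, hpr₀⟩ := hall
      obtain ⟨i₀, hi₀, -⟩ := (hrep p₀ r₀).mp (haE p₀ r₀ hpr₀)
      haveI : Nonempty ι := ⟨i₀⟩
      classical
      set c : P → R → ι := fun p r =>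
        if h : ∃ i ∈ I, p ∈ Ps i ∧ r ∈ Rs i then h.choose else Classical.arbitrary ι with hc
      have hcspec : ∀ p r, E p r → c p r ∈ I ∧ p ∈ Ps (c p r) ∧ r ∈ Rs (c p r) := by
        intro p r hE
        have h : ∃ i ∈ I, p ∈ Ps i ∧ r ∈ Rs i := (hrep p r).mp hE
        simp only [hc, dif_pos h]
        exact ⟨h.choose_spec.1, h.choose_spec.2.1, h.choose_spec.2.2⟩
      set f₁ : P → ι → ℝ := fun p i => ∑ r, if c p r = i then a p r else 0 with hf₁
      set f₂ : ι → R → ℝ := fun i r => ∑ p, if c p r = i then a p r else 0 with hf₂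
      have h01 : ∀ p i, 0 ≤ f₁ p i :=
        fun p i => Finset.sum_nonneg fun r _ => by split <;> [exact ha0 p r; rfl]
      have h02 : ∀ i r, 0 ≤ f₂ i r :=
        fun i r => Finset.sum_nonneg fun p _ => by split <;> [exact ha0 p r; rfl]
      have hrow : ∀ p, ∑ i ∈ I, f₁ p i = ∑ r, a p r := by
        intro p
        rw [hf₁]
        simp only []
        rw [Finset.sum_comm]
        refine Finset.sum_congr rfl fun r _ => ?_
        rcases eq_or_ne (a p r) 0 with h | h
        · simp [h]
        · have hcI := (hcspec p r (haE p r h)).1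
          simp [Finset.sum_ite_eq, hcI]
      have hcol : ∀ r, ∑ i ∈ I, f₂ i r = ∑ p, a p r := by
        intro r
        rw [hf₂]
        simp only []
        rw [Finset.sum_comm]
        refine Finset.sum_congr rfl fun p _ => ?_
        rcases eq_or_ne (a p r) 0 with h | h
        · simp [h]
        · have hcI := (hcspec p r (haE p r h)).1
          simp [Finset.sum_ite_eq, hcI]
      have hf₁le : ∀ p i, f₁ p i ≤ ∑ r, a p r := by
        intro p i
        refine Finset.sum_le_sum fun r _ => ?_
        split <;> [exact le_rfl; exact ha0 p r]
      have hf₂le : ∀ i r, f₂ i r ≤ ∑ p, a p r := by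
        intro i r
        refine Finset.sum_le_sum fun p _ => ?_
        split <;> [exact le_rfl; exact ha0 p r]
      refine ⟨fun p => ∑ i ∈ I, f₁ p i, f₁, f₂, fun r => ∑ i ∈ I, f₂ i r,
        fun p => Finset.sum_nonneg fun i _ => h01 p i, h01, h02,
        fun r => Finset.sum_nonneg fun i _ => h02 i r, ?_, ?_, ?_, ?_, ?_, ?_,
        fun p => rfl, ?_, fun r => rfl, ?_⟩
      · intro p; exact le_of_eq_of_le (hrow p) (has p)
      · intro r; exact le_of_eq_of_le (hcol r) (had r)
      · intro p i
        rw [hμ]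
        refine le_min ?_ ?_
        · calc f₁ p i ≤ ∑ r, a p r := hf₁le p i
            _ ≤ s p := has p
            _ ≤ ∑ q, s q := Finset.single_le_sum (fun q _ => (hs q).le) (Finset.mem_univ p)
        · calc f₁ p i ≤ ∑ r, a p r := hf₁le p i
            _ ≤ ∑ r, d r := Finset.sum_le_sum fun r _ =>
                le_trans (Finset.single_le_sum (fun q _ => ha0 q r) (Finset.mem_univ p)) (had r)
      · intro i r
        rw [hμ]
        refine le_min ?_ ?_
        · calc f₂ i r ≤ ∑ p, a p r := hf₂le i r
            _ ≤ ∑ p, s p := Finset.sum_le_sum fun p _ =>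
                le_trans (Finset.single_le_sum (fun q _ => ha0 p q) (Finset.mem_univ r)) (has p)
        · calc f₂ i r ≤ ∑ p, a p r := hf₂le i r
            _ ≤ d r := had r
            _ ≤ ∑ q, d q := Finset.single_le_sum (fun q _ => (hd q).le) (Finset.mem_univ r)
      · intro p i hne
        obtain ⟨r, -, hr⟩ := Finset.exists_ne_zero_of_sum_ne_zero hne
        have hci : c p r = i := by by_contra h; simp [h] at hr
        have har : a p r ≠ 0 := by
          intro h; rw [h] at hr; simp at hr
        obtain ⟨hI, hP, -⟩ := hcspec p r (haE p r har)
        exact ⟨hci ▸ hI, hci ▸ hP⟩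
      · intro i r hne
        obtain ⟨p, -, hp⟩ := Finset.exists_ne_zero_of_sum_ne_zero hne
        have hci : c p r = i := by by_contra h; simp [h] at hp
        have har : a p r ≠ 0 := by
          intro h; rw [h] at hp; simp at hp
        obtain ⟨hI, -, hR⟩ := hcspec p r (haE p r har)
        exact ⟨hci ▸ hI, hci ▸ hR⟩
      · intro i
        rw [hf₁, hf₂]
        exact Finset.sum_comm
      · rw [← haη]
        exact Finset.sum_congr rfl fun p _ => hrow p
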